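/- arXiv:math/0508211 — 2 statements merged into one kernel-verified Lean document; each statement's English description precedes it below -/
import Mathlib

section
/- Let $k$ be a field, let $S = k[X_1,\ldots,X_e]/\mathfrak{a}$ be a reduced equidimensional affine $k$-algebra with $\mathfrak{a} = (h_1,\ldots,h_t)$ of height $c$, and let $K = (f_1,\ldots,f_g)$ be an ideal generated by a regular sequence of length $g$. Form the extended Rees algebra $B = S[Kt, t^{-1}] \subset S[t,t^{-1}]$, presented by the surjection $\varphi: k[X_1,\ldots,X_e,T_1,\ldots,T_g,U] \to B$ sending $X_i \mapsto x_i$, $T_j \mapsto f_j t$, $U \mapsto t^{-1}$. Then the ideal of $(c+g) \times (c+g)$ minors of the Jacobian matrix of the elements $\{h_i, T_jU - f_j\}$ contains $I_c\left(\left(\frac{\partial h_i}{\partial X_j}\right)\right) U^{g-1} (T_1,\ldots,T_g)$. -/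
set_option synthInstance.maxHeartbeats 1000000
set_option maxHeartbeats 1000000

open Polynomial IsLocalRing

noncomputable section

/-- The length of a module, as the Krull dimension of its submodule lattice. -/
def modLength (R M : Type*) [CommRing R] [AddCommGroup M] [Module R M] : WithBot ℕ∞ :=
  Order.krullDim (Submodule R M)

/-- The integral closure of an ideal: all `z` satisfying an equation
`z^n + a_1 z^{n-1} + ... + a_n = 0` with `a_i ∈ I^i`. -/
def idealIC {R : Type*} [CommRing R] (I : Ideal R) : Set R :=
  {z | ∃ n : ℕ, 0 < n ∧ ∃ a : ℕ → R, (∀ i, a i ∈ I ^ i) ∧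
    z ^ n + ∑ i ∈ Finset.range n, a (i + 1) * z ^ (n - (i + 1)) = 0}

/-- `J` is a reduction of `I`. -/
def IsReduction {R : Type*} [CommRing R] (J I : Ideal R) : Prop :=
  J ≤ I ∧ idealIC J = idealIC I

/-- `b` is the Briançon–Skoda number of `I`. -/
def IsBSNum {R : Type*} [CommRing R] (I : Ideal R) (b : ℕ) : Prop :=
  (∀ (n : ℕ) (J : Ideal R), IsReduction J I → idealIC (I ^ (n + b)) ⊆ ↑(J ^ n)) ∧
  ∀ b' : ℕ, (∀ (n : ℕ) (J : Ideal R), IsReduction J I → idealIC (I ^ (n + b')) ⊆ ↑(J ^ n)) →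
    b ≤ b'

/-- `f` is a regular sequence on `R`. -/
def IsRegSeq {R : Type*} [CommRing R] {n : ℕ} (f : Fin n → R) : Prop :=
  ∀ (i : Fin n) (x : R), f i * x ∈ Ideal.span (f '' {j | j < i}) →
    x ∈ Ideal.span (f '' {j | j < i})

/-- A local ring is Cohen–Macaulay if it has a regular sequence of length its dimension
consisting of elements of the maximal ideal. -/
def IsCMLocalRing (R : Type*) [CommRing R] [IsLocalRing R] : Prop :=
  ∃ n : ℕ, (n : WithBot ℕ∞) = ringKrullDim R ∧
    ∃ f : Fin n → R, (∀ i, f i ∈ maximalIdeal R) ∧ IsRegSeq f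

/-- Serre's condition `S_2`: for every prime, the local ring has depth at least
`min(2, dim)`, expressed via existence of regular sequences. -/
def SerreS2 (A : Type*) [CommRing A] : Prop :=
  ∀ (q : PrimeSpectrum A) (n : ℕ),
    (n : WithBot ℕ∞) ≤ min 2 (ringKrullDim (Localization.AtPrime q.asIdeal)) →
      ∃ f : Fin n → Localization.AtPrime q.asIdeal,
        (∀ i, f i ∈ maximalIdeal (Localization.AtPrime q.asIdeal)) ∧ IsRegSeq f

/-- A local ring is analytically unramified if its completion is reduced. -/
def AnalyticallyUnramified (R : Type*) [CommRing R] [IsLocalRing R] : Prop :=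
  IsReduced (AdicCompletion (maximalIdeal R) R)

/-- The degree `n` component of a subalgebra of `R[X]`. -/
def algComp {R : Type*} [CommRing R] (A : Subalgebra R R[X]) (n : ℕ) : Ideal R where
  carrier := {r | C r * X ^ n ∈ A}
  add_mem' := fun {a b} ha hb => by
    simpa [C_add, add_mul] using A.add_mem ha hb
  zero_mem' := by simpa using A.zero_mem
  smul_mem' := fun c x hx => by
    have h := A.mul_mem (A.algebraMap_mem c) hx
    rw [Polynomial.algebraMap_eq] at h
    simpa [smul_eq_mul, map_mul, mul_assoc] using h

/-- A subalgebra of `R[X]` is graded if it contains all homogeneous components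
of its elements. -/
def IsGradedSubalg {R : Type*} [CommRing R] (A : Subalgebra R R[X]) : Prop :=
  ∀ p ∈ A, ∀ n : ℕ, Polynomial.C (p.coeff n) * X ^ n ∈ A

/-- The annihilator of `B/A` as an ideal of the Rees algebra. -/
def annBA {R : Type*} [CommRing R] (I : Ideal R) (A B : Subalgebra R R[X])
    (hIA : reesAlgebra I ≤ A) : Ideal ↥(reesAlgebra I) where
  carrier := {s | ∀ b ∈ B, (s : R[X]) * b ∈ A}
  add_mem' := fun {s t} hs ht b hb => by
    have h : ((s + t : ↥(reesAlgebra I)) : R[X]) * b = (s : R[X]) * b + (t : R[X]) * b := by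
      push_cast; ring
    rw [h]; exact A.add_mem (hs b hb) (ht b hb)
  zero_mem' := fun b hb => by simpa using A.zero_mem
  smul_mem' := fun c s hs b hb => by
    rw [smul_eq_mul]
    push_cast
    rw [mul_assoc]
    exact A.mul_mem (hIA c.2) (hs b hb)

/-- The filtration `{F n}` has Hilbert–Samuel polynomial with coefficients `e0, e1`
(and some lower order terms) in dimension `d`. -/
def HasHilbFil {R : Type*} [CommRing R] (F : ℕ → Ideal R) (d : ℕ) (e0 e1 : ℤ) : Prop :=
  ∃ (c : Fin (d - 1) → ℤ) (N : ℕ), ∀ n ≥ N, ∃ L : ℕ,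
    modLength R (R ⧸ F n) = ((L : ℕ∞) : WithBot ℕ∞) ∧
    (L : ℤ) = e0 * ((n + d - 1).choose d : ℤ) - e1 * ((n + d - 2).choose (d - 1) : ℤ) +
      ∑ i : Fin (d - 1), c i * (n : ℤ) ^ (i : ℕ)

/-- Hilbert coefficients of an ideal in a ring, with the dimension of the ring. -/
def HasHilb (A : Type*) [CommRing A] (q : Ideal A) (e0 e1 : ℤ) : Prop :=
  ∃ d : ℕ, (d : WithBot ℕ∞) = ringKrullDim A ∧ HasHilbFil (fun n => q ^ n) d e0 e1

/-- `e` is the Hilbert–Samuel multiplicity of the ideal `q` of `A`. -/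
def IsMultOf (A : Type*) [CommRing A] (q : Ideal A) (e : ℤ) : Prop :=
  ∃ d : ℕ, (d : WithBot ℕ∞) = ringKrullDim A ∧ ∃ (c : Fin d → ℤ) (N : ℕ), ∀ n ≥ N, ∃ L : ℕ,
    modLength A (A ⧸ q ^ n) = ((L : ℕ∞) : WithBot ℕ∞) ∧
    (L : ℤ) = e * ((n + d - 1).choose d : ℤ) + ∑ i : Fin d, c i * (n : ℤ) ^ (i : ℕ)

/-- The height of an ideal. -/
def idealHeight {R : Type*} [CommRing R] (I : Ideal R) : ℕ∞ :=
  ⨅ (p : PrimeSpectrum R) (_ : I ≤ p.asIdeal), Order.height p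

/-- An ideal is equimultiple of height `g` if it has height `g` and a reduction
generated by `g` elements. -/
def IsEquimultiple {R : Type*} [CommRing R] (I : Ideal R) (g : ℕ) : Prop :=
  idealHeight I = (g : ℕ∞) ∧
    ∃ J : Ideal R, IsReduction J I ∧ ∃ f : Fin g → R, J = Ideal.span (Set.range f)

/-- The minimal primes of `I` of maximal dimension. -/
def minlPrimesMaxDim {R : Type*} [CommRing R] (I : Ideal R) : Set (PrimeSpectrum R) :=
  {p | p.asIdeal ∈ I.minimalPrimes ∧ ringKrullDim (R ⧸ p.asIdeal) = ringKrullDim (R ⧸ I)}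

/-- `E0(I)` and `E1(I)`: multiplicity-weighted sums of local Hilbert coefficients. -/
def HasE01 {R : Type*} [CommRing R] [IsLocalRing R] (I : Ideal R) (E0 E1 : ℤ) : Prop :=
  ∃ s : Finset (PrimeSpectrum R), (↑s = minlPrimesMaxDim I) ∧
    ∃ e0 e1 dg : PrimeSpectrum R → ℤ,
      (∀ p ∈ s,
        HasHilb (Localization.AtPrime p.asIdeal)
          (Ideal.map (algebraMap R (Localization.AtPrime p.asIdeal)) I) (e0 p) (e1 p) ∧
        IsMultOf (R ⧸ p.asIdeal)
          (Ideal.map (Ideal.Quotient.mk p.asIdeal) (maximalIdeal R)) (dg p)) ∧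
      E0 = ∑ p ∈ s, e0 p * dg p ∧ E1 = ∑ p ∈ s, e1 p * dg p


open MvPolynomial in
/-- The ideal of `r × r` minors of a matrix. -/
def minorsIdeal {R : Type*} [CommRing R] {m n : Type*} (r : ℕ) (M : Matrix m n R) : Ideal R :=
  Ideal.span {x | ∃ (ri : Fin r → m) (ci : Fin r → n),
    x = Matrix.det (Matrix.of fun i j => M (ri i) (ci j))}

open MvPolynomial in
lemma pderiv_rename_of_notMem_range {σ τ R : Type*} [CommSemiring R] {f : σ → τ} {y : τ}
    (hy : y ∉ Set.range f) (p : MvPolynomial σ R) :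
    MvPolynomial.pderiv y (MvPolynomial.rename f p) = 0 := by
  classical
  induction p using MvPolynomial.induction_on with
  | C a => simp
  | add p q hp hq => simp [hp, hq]
  | mul_X p x hp =>
    have hne : f x ≠ y := fun hxy => hy ⟨x, hxy⟩
    simp only [map_mul, rename_X, Derivation.leibniz, smul_eq_mul, hp,
      pderiv_X_of_ne hne, pderiv_X, Pi.single_eq_of_ne hne]
    simp

lemma det_updateCol_smul_one {R : Type*} [CommRing R] {g : ℕ} (u : R) (m : Fin g)
    (v : Fin g → R) :
    Matrix.det (Matrix.updateCol (u • (1 : Matrix (Fin g) (Fin g) R)) m v)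
      = u ^ (g - 1) * v m := by
  rw [← Matrix.cramer_apply, Matrix.cramer_eq_adjugate_mulVec, Matrix.adjugate_smul,
    Matrix.adjugate_one]
  simp [Matrix.mulVec, dotProduct, Matrix.one_apply, Fintype.card_fin]


open MvPolynomial in
theorem jacobian_minors_containment
    (k : Type*) [Field k] (e tnum g c : ℕ)
    (h : Fin tnum → MvPolynomial (Fin e) k)
    (a : Ideal (MvPolynomial (Fin e) k)) (ha : a = Ideal.span (Set.range h))
    (hht : idealHeight a = (c : ℕ∞))
    (hred : IsReduced (MvPolynomial (Fin e) k ⧸ a))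
    (hequi : ∀ p ∈ minimalPrimes (MvPolynomial (Fin e) k ⧸ a),
      ringKrullDim ((MvPolynomial (Fin e) k ⧸ a) ⧸ p) =
        ringKrullDim (MvPolynomial (Fin e) k ⧸ a))
    (f : Fin g → MvPolynomial (Fin e) k ⧸ a)
    (hfreg : IsRegSeq f)
    (fp : Fin g → MvPolynomial (Fin e) k)
    (hfp : ∀ j, Ideal.Quotient.mk a (fp j) = f j) :
    minorsIdeal c
        (Matrix.of fun (i : Fin tnum) (j : Fin e) =>
          (rename (Sum.inl : Fin e → Fin e ⊕ Fin g ⊕ Unit)) (pderiv j (h i))) *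
      Ideal.span {(X (Sum.inr (Sum.inr ())) : MvPolynomial (Fin e ⊕ Fin g ⊕ Unit) k) ^ (g - 1)} *
      Ideal.span (Set.range fun j : Fin g =>
        (X (Sum.inr (Sum.inl j)) : MvPolynomial (Fin e ⊕ Fin g ⊕ Unit) k)) ≤
    minorsIdeal (c + g)
      (Matrix.of fun (i : Fin tnum ⊕ Fin g) (v : Fin e ⊕ Fin g ⊕ Unit) =>
        pderiv v (Sum.elim (fun i => rename (Sum.inl : Fin e → Fin e ⊕ Fin g ⊕ Unit) (h i))
          (fun j => X (Sum.inr (Sum.inl j)) * X (Sum.inr (Sum.inr ())) -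
            rename (Sum.inl : Fin e → Fin e ⊕ Fin g ⊕ Unit) (fp j)) i)) := by
  classical
  set R := MvPolynomial (Fin e ⊕ Fin g ⊕ Unit) k
  set UU : R := X (Sum.inr (Sum.inr ()))
  set TT : Fin g → R := fun j => X (Sum.inr (Sum.inl j))
  rw [minorsIdeal, minorsIdeal, Ideal.span_mul_span', Ideal.span_mul_span', Ideal.span_le]
  rintro x hx
  rw [Set.mem_mul] at hx
  obtain ⟨y, hy, s, hs, rfl⟩ := hx
  rw [Set.mem_mul] at hy
  obtain ⟨d, hd, u, hu, rfl⟩ := hy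
  rw [Set.mem_singleton_iff] at hu
  subst hu
  obtain ⟨m, rfl⟩ := hs
  obtain ⟨ri, ci, rfl⟩ := hd
  apply Ideal.subset_span
  set A : Matrix (Fin c) (Fin c) R :=
    Matrix.of fun i j => rename (Sum.inl : Fin e → Fin e ⊕ Fin g ⊕ Unit) (pderiv (ci j) (h (ri i)))
  set C : Matrix (Fin g) (Fin c) R :=
    Matrix.of fun jj j =>
      -(rename (Sum.inl : Fin e → Fin e ⊕ Fin g ⊕ Unit) (pderiv (ci j) (fp jj)))
  set D : Matrix (Fin g) (Fin g) R :=
    Matrix.updateCol (UU • (1 : Matrix (Fin g) (Fin g) R)) m TT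
  set rowm : Fin c ⊕ Fin g → Fin tnum ⊕ Fin g := Sum.elim (Sum.inl ∘ ri) Sum.inr
  set colm : Fin c ⊕ Fin g → Fin e ⊕ Fin g ⊕ Unit :=
    Sum.elim (Sum.inl ∘ ci)
      (fun l => Sum.inr (if l = m then Sum.inr () else Sum.inl l))
  refine ⟨rowm ∘ finSumFinEquiv.symm, colm ∘ finSumFinEquiv.symm, ?_⟩
  have hmat : (Matrix.of fun i j =>
      (Matrix.of fun (i : Fin tnum ⊕ Fin g) (v : Fin e ⊕ Fin g ⊕ Unit) =>
        pderiv v (Sum.elim (fun i => rename (Sum.inl : Fin e → Fin e ⊕ Fin g ⊕ Unit) (h i))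
          (fun j => X (Sum.inr (Sum.inl j)) * X (Sum.inr (Sum.inr ())) -
            rename (Sum.inl : Fin e → Fin e ⊕ Fin g ⊕ Unit) (fp j)) i))
        ((rowm ∘ finSumFinEquiv.symm) i) ((colm ∘ finSumFinEquiv.symm) j))
      = (Matrix.fromBlocks A 0 C D).submatrix
          (finSumFinEquiv (m := c) (n := g)).symm finSumFinEquiv.symm := by
    refine Matrix.ext fun i j => ?_
    simp only [Matrix.submatrix_apply, Function.comp_apply, Matrix.of_apply]
    rcases finSumFinEquiv.symm i with ii | jj <;> rcases finSumFinEquiv.symm j with l | l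
    · simp [rowm, colm, A, pderiv_rename Sum.inl_injective]
    · simp only [rowm, colm, Sum.elim_inl, Sum.elim_inr, Function.comp_apply,
        Matrix.fromBlocks_apply₁₂, Matrix.zero_apply]
      refine pderiv_rename_of_notMem_range ?_ _
      rintro ⟨w, hw⟩
      simp at hw
    · simp only [rowm, colm, Sum.elim_inl, Sum.elim_inr, Function.comp_apply,
        Matrix.fromBlocks_apply₂₁, map_sub, C, Matrix.of_apply]
      rw [pderiv_mul, pderiv_X_of_ne (by simp), pderiv_X_of_ne (by simp),
        pderiv_rename Sum.inl_injective]
      ring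
    · simp only [rowm, colm, Sum.elim_inr, Matrix.fromBlocks_apply₂₂, D,
        Matrix.updateCol_apply, Matrix.smul_apply, Matrix.one_apply, smul_eq_mul]
      by_cases hl : l = m
      · subst hl
        simp only [if_pos rfl]
        rw [map_sub, pderiv_mul, pderiv_X_of_ne (by simp), pderiv_X,
          pderiv_rename_of_notMem_range (by simp)]
        simp [TT]
      · simp only [if_neg hl]
        rw [map_sub, pderiv_mul, pderiv_X, pderiv_X_of_ne (by simp),
          pderiv_rename_of_notMem_range (by simp)]
        by_cases hjl : jj = l
        · subst hjl; simp [UU, Pi.single_eq_same]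
        · simp [Pi.single_eq_of_ne (fun hh => hjl (Sum.inl_injective (Sum.inr_injective hh))),
            hjl]
  rw [hmat, Matrix.det_submatrix_equiv_self, Matrix.det_fromBlocks_zero₁₂,
    det_updateCol_smul_one]
  have hA : (Matrix.of fun i j => Matrix.of
      (fun i j => (rename (Sum.inl : Fin e → Fin e ⊕ Fin g ⊕ Unit)) ((pderiv j) (h i)))
      (ri i) (ci j)) = A := rfl
  rw [hA]
  ring


end
end

section
/- Let $(S, \mathfrak{n})$ be a one-dimensional analytically unramified local Cohen–Macaulay ring with finite integral closure $\overline{S}$, let $f \in S$ be a non zerodivisor with $fS$ being $\mathfrak{n}$-primary, and suppose $\overline{f^nS} = f^n \overline{S} \cap S$ for all $n \gg 0$. Let $b$ be the Briançon–Skoda number of the ideal $fS$, i.e., the least $b \geq 0$ with $\overline{f^{n+b}S} \subset f^n S$ for all $n$. Then $f^b \overline{S} \subset S :_S \overline{S}$, and $b$ is the least nonnegative integer $c$ with $f^c\overline{S} \subset S$. -/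
set_option synthInstance.maxHeartbeats 1000000
set_option maxHeartbeats 1000000

open Polynomial IsLocalRing

noncomputable section

/-- The conductor `S :_S S̄` of the integral closure of `S` in its total ring of fractions. -/
def conductorIdeal (S : Type*) [CommRing S] : Ideal S where
  carrier := {x | ∀ y : ↥(integralClosure S (FractionRing S)),
    x • y ∈ LinearMap.range (Algebra.linearMap S ↥(integralClosure S (FractionRing S)))}
  add_mem' := fun {a b} ha hb y => by
    rw [add_smul]
    exact Submodule.add_mem _ (ha y) (hb y)
  zero_mem' := fun y => by
    rw [zero_smul]
    exact Submodule.zero_mem _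
  smul_mem' := fun c x hx y => by
    rw [smul_eq_mul, mul_smul]
    exact Submodule.smul_mem _ c (hx y)


-- Lemma A
lemma lemA {S : Type*} [CommRing S] (f : S) (hf : f ∈ nonZeroDivisors S) (m : ℕ) (x : S)
    (hx : x ∈ idealIC (Ideal.span {f} ^ m)) :
    ∃ w : ↥(integralClosure S (FractionRing S)),
      algebraMap S (FractionRing S) x
        = (algebraMap S (FractionRing S) f) ^ m * (w : FractionRing S) := by
  obtain ⟨n, hn, a, ha, heq⟩ := hx
  set K := FractionRing S
  set ι := algebraMap S K with hι
  have hdvd : ∀ i, ∃ s : S, a i = f ^ (m * i) * s := by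
    intro i
    have h1 : a i ∈ Ideal.span ({f ^ (m * i)} : Set S) := by
      have := ha i
      rwa [← pow_mul, Ideal.span_singleton_pow] at this
    obtain ⟨s, hs⟩ := Ideal.mem_span_singleton'.mp h1
    exact ⟨s, by rw [← hs, mul_comm]⟩
  choose s hs using hdvd
  have hu : IsUnit (ι f) := IsLocalization.map_units (M := nonZeroDivisors S) K ⟨f, hf⟩
  have hum : IsUnit (ι f ^ m) := hu.pow m
  obtain ⟨v, hv⟩ := hum
  set w0 : K := ↑(v⁻¹) * ι x with hw0
  have hw : ι f ^ m * w0 = ι x := by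
    rw [hw0, ← mul_assoc, ← hv, Units.mul_inv, one_mul]
  -- the monic polynomial
  set p : S[X] := X ^ n + ∑ i ∈ Finset.range n, C (s (i + 1)) * X ^ (n - (i + 1)) with hp
  have hmonic : p.Monic := by
    rw [hp]
    apply Polynomial.monic_X_pow_add
    apply lt_of_le_of_lt (Polynomial.degree_sum_le _ _)
    refine (Finset.sup_lt_iff (by exact_mod_cast WithBot.bot_lt_coe n)).mpr ?_
    intro i hi
    apply lt_of_le_of_lt (Polynomial.degree_C_mul_X_pow_le _ _)
    exact_mod_cast (by omega : n - (i + 1) < n)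
  have haev : Polynomial.aeval w0 p = 0 := by
    have key : ι f ^ (m * n) * Polynomial.aeval w0 p = 0 := by
      have hev : Polynomial.aeval w0 p
          = w0 ^ n + ∑ i ∈ Finset.range n, ι (s (i + 1)) * w0 ^ (n - (i + 1)) := by
        simp [hp, map_sum, hι]
      rw [hev, mul_add, Finset.mul_sum]
      have h1 : ι f ^ (m * n) * w0 ^ n = ι x ^ n := by
        rw [pow_mul, ← mul_pow, hw]
      have h2 : ∀ i ∈ Finset.range n,
          ι f ^ (m * n) * (ι (s (i + 1)) * w0 ^ (n - (i + 1)))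
            = ι (a (i + 1) * x ^ (n - (i + 1))) := by
        intro i hi
        simp only [Finset.mem_range] at hi
        have hsplit : m * n = m * (i + 1) + m * (n - (i + 1)) := by
          rw [← Nat.mul_add]; congr 1; omega
        rw [hsplit, pow_add]
        have h3 : ι f ^ (m * (n - (i+1))) * w0 ^ (n - (i+1)) = ι x ^ (n - (i+1)) := by
          rw [pow_mul, ← mul_pow, hw]
        calc ι f ^ (m * (i+1)) * ι f ^ (m * (n - (i+1))) * (ι (s (i + 1)) * w0 ^ (n - (i + 1)))
            = (ι f ^ (m * (i+1)) * ι (s (i+1))) * (ι f ^ (m * (n - (i+1))) * w0 ^ (n - (i+1))) := by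
              ring
          _ = ι (a (i + 1) * x ^ (n - (i + 1))) := by
              rw [h3, ← map_pow, ← map_pow, ← map_mul, ← map_mul, ← hs]
      rw [h1, Finset.sum_congr rfl h2, ← map_pow, ← map_sum, ← map_add]
      have : (x ^ n + ∑ i ∈ Finset.range n, a (i + 1) * x ^ (n - (i + 1))) = 0 := heq
      rw [this, map_zero]
    have hun : IsUnit (ι f ^ (m * n)) := hu.pow _
    exact (IsUnit.mul_right_eq_zero hun).mp key
  have hint : IsIntegral S w0 := ⟨p, hmonic, by rwa [Polynomial.aeval_def] at haev⟩
  exact ⟨⟨w0, hint⟩, hw.symm⟩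



lemma lemB {S : Type*} [CommRing S] [IsLocalRing S] (f : S) (hf : f ∈ nonZeroDivisors S)
    (J : Ideal S) (hred : IsReduction J (Ideal.span {f})) : f ∈ J := by
  have hfI : f ∈ idealIC (Ideal.span {f}) := by
    refine ⟨1, one_pos, fun i => if i = 1 then -f else 0, ?_, ?_⟩
    · intro i
      by_cases h : i = 1
      · simp [h, Ideal.neg_mem_iff, Ideal.mem_span_singleton_self]
      · simp [h]
    · simp
  rw [← hred.2] at hfI
  obtain ⟨n, hn, a, ha, heq⟩ := hfI
  have hdvd : ∀ i, ∃ u : S, a i = f ^ i * u := by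
    intro i
    have h1 : a i ∈ Ideal.span ({f ^ i} : Set S) := by
      have := Ideal.pow_right_mono hred.1 i (ha i)
      rwa [Ideal.span_singleton_pow] at this
    obtain ⟨u, hu⟩ := Ideal.mem_span_singleton'.mp h1
    exact ⟨u, by rw [← hu, mul_comm]⟩
  choose u hu using hdvd
  have hsum : 1 + ∑ i ∈ Finset.range n, u (i + 1) = 0 := by
    have key : f ^ n * (1 + ∑ i ∈ Finset.range n, u (i + 1)) = f ^ n * 0 := by
      rw [mul_zero, mul_add, mul_one, Finset.mul_sum, ← heq]
      congr 1
      apply Finset.sum_congr rfl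
      intro i hi
      simp only [Finset.mem_range] at hi
      rw [hu (i + 1)]
      have h2 : (i + 1) + (n - (i + 1)) = n := by omega
      calc f ^ n * u (i + 1) = f ^ ((i + 1) + (n - (i + 1))) * u (i + 1) := by rw [h2]
        _ = f ^ (i + 1) * u (i + 1) * f ^ (n - (i + 1)) := by rw [pow_add]; ring
    exact (mul_cancel_left_mem_nonZeroDivisors (pow_mem hf n)).mp key
  have hex : ∃ j ∈ Finset.range n, u (j + 1) ∉ maximalIdeal S := by
    by_contra hcon
    push_neg at hcon
    have h1 : (1 : S) ∈ maximalIdeal S := by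
      have hs : ∑ i ∈ Finset.range n, u (i + 1) ∈ maximalIdeal S :=
        Ideal.sum_mem _ fun i hi => hcon i hi
      rw [eq_neg_of_add_eq_zero_left hsum]
      exact neg_mem hs
    exact (maximalIdeal.isMaximal S).ne_top (Ideal.eq_top_of_isUnit_mem _ h1 isUnit_one)
  obtain ⟨j, hj, hju⟩ := hex
  have hunit : IsUnit (u (j + 1)) := by
    by_contra hcon
    exact hju (hcon)
  have haJ : a (j + 1) ∈ Ideal.span ({f ^ j} : Set S) * J := by
    have h1 : J ^ (j + 1) ≤ Ideal.span ({f ^ j} : Set S) * J := by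
      rw [pow_succ]
      apply Ideal.mul_mono_left
      have := Ideal.pow_right_mono hred.1 j
      rwa [Ideal.span_singleton_pow] at this
    exact h1 (ha (j + 1))
  obtain ⟨w, hwJ, hw⟩ := Ideal.mem_span_singleton_mul.mp haJ
  have hcancel : w = f * u (j + 1) := by
    have key : f ^ j * w = f ^ j * (f * u (j + 1)) := by
      rw [hw, hu (j + 1)]; ring
    exact (mul_cancel_left_mem_nonZeroDivisors (pow_mem hf j)).mp key
  have hfu : f * u (j + 1) ∈ J := hcancel ▸ hwJ
  have : f = ↑hunit.unit⁻¹ * (f * u (j + 1)) := by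
    rw [mul_comm f, ← mul_assoc]
    rw [hunit.val_inv_mul, one_mul]
  rw [this]
  exact Ideal.mul_mem_left _ _ hfu



lemma lemC1 {S : Type*} [CommRing S] {t : S} (ht : t ∈ nonZeroDivisors S)
    {p : Ideal S} (hp : p ∈ (⊥ : Ideal S).minimalPrimes) : t ∉ p := by
  intro htp
  haveI := hp.1.1
  set M : Submonoid S := Submonoid.powers t ⊔ p.primeCompl with hM
  by_cases h0 : (0 : S) ∈ M
  · obtain ⟨y, hy, z, hz, hyz⟩ := Submonoid.mem_sup.mp h0
    obtain ⟨n, rfl⟩ := hy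
    have hz0 : z = 0 := (pow_mem ht n).2 z (by rw [mul_comm]; exact hyz)
    exact hz (hz0 ▸ p.zero_mem)
  · have hdisj : Disjoint ((⊥ : Ideal S) : Set S) (M : Set S) := by
      rw [Set.disjoint_left]
      intro x hx hxM
      rw [SetLike.mem_coe, Ideal.mem_bot] at hx
      exact h0 (hx ▸ hxM)
    obtain ⟨q, hqprime, _, hq3⟩ := Ideal.exists_le_prime_disjoint ⊥ M hdisj
    have hqp : q ≤ p := by
      intro x hx
      by_contra hxp
      exact (Set.disjoint_left.mp hq3) hx (Submonoid.mem_sup_right hxp)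
    have hpq := hp.2 ⟨hqprime, bot_le⟩ hqp
    exact (Set.disjoint_left.mp hq3) (hpq htp)
      (Submonoid.mem_sup_left ⟨1, pow_one t⟩)

lemma lemC2 {S : Type*} [CommRing S] [IsLocalRing S]
    (hdim : ringKrullDim S = (1 : WithBot ℕ∞)) {t : S}
    (ht : t ∈ nonZeroDivisors S) (htm : t ∈ maximalIdeal S) :
    (Ideal.span {t}).radical = maximalIdeal S := by
  have hprime : ∀ p : Ideal S, p.IsPrime → t ∈ p → p = maximalIdeal S := by
    intro p hp htp
    by_contra hne
    have hpm : p < maximalIdeal S :=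
      lt_of_le_of_ne (IsLocalRing.le_maximalIdeal hp.ne_top) hne
    obtain ⟨q, hq, hqp⟩ := Ideal.exists_minimalPrimes_le (bot_le (a := p))
    have htq : t ∉ q := lemC1 ht hq
    have hqlt : q < p := lt_of_le_of_ne hqp (fun h => htq (h ▸ htp))
    haveI hq' : q.IsPrime := hq.1.1
    haveI hm' : (maximalIdeal S).IsPrime := (maximalIdeal.isMaximal S).isPrime
    let c0 : LTSeries (PrimeSpectrum S) := RelSeries.singleton _ ⟨q, hq'⟩
    let c1 : LTSeries (PrimeSpectrum S) := c0.snoc ⟨p, hp⟩ (by exact hqlt)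
    let c2 : LTSeries (PrimeSpectrum S) := c1.snoc ⟨maximalIdeal S, hm'⟩ (by
      show c1.last < _
      have : c1.last = ⟨p, hp⟩ := RelSeries.last_snoc _ _ _
      rw [this]
      exact hpm)
    have hlen : c2.length = 2 := rfl
    have h2 : (2 : ℕ) ≤ ringKrullDim S := by
      have := Order.LTSeries.length_le_krullDim c2
      rw [hlen] at this
      exact_mod_cast this
    rw [hdim] at h2
    norm_num at h2
  rw [Ideal.radical_eq_sInf]
  apply le_antisymm
  · exact sInf_le ⟨(Ideal.span_singleton_le_iff_mem _).mpr htm, (maximalIdeal.isMaximal S).isPrime⟩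
  · apply le_sInf
    rintro p ⟨hp1, hp2⟩
    exact (hprime p hp2 (hp1 (Ideal.mem_span_singleton_self t))).ge



lemma lemC {S : Type*} [CommRing S] [IsNoetherianRing S] [IsLocalRing S]
    (hdim : ringKrullDim S = (1 : WithBot ℕ∞))
    (hfin : Module.Finite S ↥(integralClosure S (FractionRing S)))
    (f : S) (hf : f ∈ nonZeroDivisors S) (hfm : f ∈ maximalIdeal S) :
    ∃ k : ℕ, ∀ y : ↥(integralClosure S (FractionRing S)),
      f ^ k • y ∈ LinearMap.range (Algebra.linearMap S ↥(integralClosure S (FractionRing S))) := by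
  classical
  set K := FractionRing S
  set T := ↥(integralClosure S K)
  set N : Submodule S T := LinearMap.range (Algebra.linearMap S T) with hN
  obtain ⟨s, hs⟩ := Module.Finite.fg_top (R := S) (M := T)
  obtain ⟨b, hb⟩ := IsLocalization.exist_integer_multiples (nonZeroDivisors S) s
    (fun y : T => (y : K))
  have hb' : ∀ y : T, (b : S) • y ∈ N := by
    have hle : (⊤ : Submodule S T) ≤ N.comap (LinearMap.lsmul S T (b : S)) := by
      rw [← hs]
      apply Submodule.span_le.mpr
      intro y hy
      obtain ⟨a, ha⟩ := hb y hy
      simp only [SetLike.mem_coe, Submodule.mem_comap, LinearMap.lsmul_apply]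
      refine ⟨a, ?_⟩
      apply Subtype.ext
      rw [Algebra.linearMap_apply]
      exact ha
    intro y
    exact hle (Submodule.mem_top (x := y))
  set t : S := (b : S) * f with hT
  have htnzd : t ∈ nonZeroDivisors S := mul_mem b.2 hf
  have htm : t ∈ maximalIdeal S := Ideal.mul_mem_left _ _ hfm
  have hrad : (Ideal.span {t}).radical = maximalIdeal S := lemC2 hdim htnzd htm
  obtain ⟨j, hj⟩ := Ideal.exists_radical_pow_le_of_fg (Ideal.span {t})
    (by rw [hrad]; exact IsNoetherian.noetherian _)
  have hfj : f ^ j ∈ Ideal.span ({t} : Set S) := by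
    apply hj
    apply Ideal.pow_mem_pow
    rw [hrad]
    exact hfm
  obtain ⟨c, hc⟩ := Ideal.mem_span_singleton'.mp hfj
  refine ⟨j, fun y => ?_⟩
  have : f ^ j • y = c • ((b : S) • (f • y)) := by
    rw [← hc, ← mul_smul, ← mul_smul]
    congr 1
    rw [hT]; ring
  rw [this]
  exact N.smul_mem c (hb' (f • y))


theorem bs_number_eq_least_conductor_exponent
    (S : Type*) [CommRing S] [IsNoetherianRing S] [IsLocalRing S]
    (hdim : ringKrullDim S = (1 : WithBot ℕ∞)) (hCM : IsCMLocalRing S)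
    (hAU : AnalyticallyUnramified S)
    (hfin : Module.Finite S ↥(integralClosure S (FractionRing S)))
    (f : S) (hf : f ∈ nonZeroDivisors S)
    (hprim : (Ideal.span {f}).radical = maximalIdeal S)
    (hic : ∃ N : ℕ, ∀ n ≥ N, idealIC (Ideal.span {f} ^ n) =
      {x : S | ∃ y : ↥(integralClosure S (FractionRing S)),
        (y : FractionRing S) ∈ integralClosure S (FractionRing S) ∧
        algebraMap S (FractionRing S) x = (algebraMap S (FractionRing S) f) ^ n * (y : FractionRing S)})
    (b : ℕ) (hb : IsBSNum (Ideal.span {f}) b) :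
    (∀ y : ↥(integralClosure S (FractionRing S)), ∃ s : S,
      algebraMap S ↥(integralClosure S (FractionRing S)) s = f ^ b • y ∧ s ∈ conductorIdeal S) ∧
    (∀ y : ↥(integralClosure S (FractionRing S)), f ^ b • y ∈
      LinearMap.range (Algebra.linearMap S ↥(integralClosure S (FractionRing S)))) ∧
    (∀ c : ℕ, (∀ y : ↥(integralClosure S (FractionRing S)), f ^ c • y ∈
      LinearMap.range (Algebra.linearMap S ↥(integralClosure S (FractionRing S)))) → b ≤ c) := by
  classical
  set K := FractionRing S with hK
  set T := ↥(integralClosure S K) with hT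
  set ι := algebraMap S K with hι
  have hinj : Function.Injective ι := IsFractionRing.injective S K
  have hu : IsUnit (ι f) := IsLocalization.map_units (M := nonZeroDivisors S) K ⟨f, hf⟩
  have hfm : f ∈ maximalIdeal S := by
    rw [← hprim]
    exact Ideal.le_radical (Ideal.mem_span_singleton_self f)
  obtain ⟨N, hN⟩ := hic
  obtain ⟨k, hk⟩ := lemC hdim hfin f hf hfm
  have hcoeM : ∀ (s0 : S) (y : T), Algebra.linearMap S T s0 = f ^ k • y →
      ι s0 = ι f ^ k * (y : K) := fun s0 y h => by
    have h1 : ((Algebra.linearMap S T s0 : T) : K) = ι s0 := rfl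
    rw [← h1, h]
    rw [SetLike.val_smul, Algebra.smul_def, map_pow]
  have part2 : ∀ y : T, f ^ b • y ∈ LinearMap.range (Algebra.linearMap S T) := by
    intro y
    set n := N + k with hn
    obtain ⟨s0, hs0⟩ := hk y
    have h2 : ι s0 = ι f ^ k * (y : K) := hcoeM s0 y hs0
    set x := f ^ (n + b - k) * s0 with hx
    have hxval : ι x = ι f ^ (n + b) * (y : K) := by
      calc ι x = ι f ^ (n + b - k) * ι s0 := by rw [hx, map_mul, map_pow]
        _ = ι f ^ (n + b - k) * (ι f ^ k * (y : K)) := by rw [h2]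
        _ = ι f ^ (n + b) * (y : K) := by
            rw [← mul_assoc, ← pow_add]
            congr 2
            omega
    have hxmem : x ∈ idealIC (Ideal.span {f} ^ (n + b)) := by
      rw [hN (n + b) (by omega)]
      exact ⟨y, y.2, hxval⟩
    have hxI : x ∈ (Ideal.span {f} ^ n : Ideal S) :=
      hb.1 n (Ideal.span {f}) ⟨le_refl _, rfl⟩ hxmem
    rw [Ideal.span_singleton_pow] at hxI
    obtain ⟨s1, hs1⟩ := Ideal.mem_span_singleton'.mp hxI
    have hfb : ι f ^ b * (y : K) = ι s1 := by
      have key : ι f ^ n * (ι f ^ b * (y : K)) = ι f ^ n * ι s1 := by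
        rw [← mul_assoc, ← pow_add, ← hxval, ← hs1, map_mul, map_pow]
        ring
      exact (hu.pow n).mul_left_cancel key
    refine ⟨s1, ?_⟩
    apply Subtype.ext
    show ((Algebra.linearMap S T s1 : T) : K) = ((f ^ b • y : T) : K)
    rw [SetLike.val_smul, Algebra.smul_def, map_pow]
    exact hfb.symm
  have part3 : ∀ c : ℕ, (∀ y : T, f ^ c • y ∈
      LinearMap.range (Algebra.linearMap S T)) → b ≤ c := by
    intro c hc
    apply hb.2
    intro n J hred
    intro x hx
    obtain ⟨w, hw⟩ := lemA f hf (n + c) x hx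
    obtain ⟨s0, hs0⟩ := hc w
    have hs0' : ι s0 = ι f ^ c * (w : K) := by
      have h1 : ((Algebra.linearMap S T s0 : T) : K) = ι s0 := rfl
      rw [← h1, hs0, SetLike.val_smul, Algebra.smul_def, map_pow]
    have hxeq : x = f ^ n * s0 := by
      apply hinj
      rw [map_mul, map_pow, hw, hs0', ← mul_assoc, ← pow_add]
    rw [hxeq]
    have hfJ : f ∈ J := lemB f hf J hred
    exact Ideal.mul_mem_right _ _ (Ideal.pow_mem_pow hfJ n)
  refine ⟨?_, part2, part3⟩
  intro y
  obtain ⟨s0, hs0⟩ := part2 y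
  have hs0c : ι s0 = ι f ^ b * (y : K) := by
    have h1 : ((Algebra.linearMap S T s0 : T) : K) = ι s0 := rfl
    rw [← h1, hs0, SetLike.val_smul, Algebra.smul_def, map_pow]
  refine ⟨s0, by rw [← Algebra.linearMap_apply]; exact hs0, ?_⟩
  intro z
  have hsz : s0 • z = f ^ b • (y * z) := by
    apply Subtype.ext
    show ((s0 • z : T) : K) = ((f ^ b • (y * z) : T) : K)
    rw [SetLike.val_smul, SetLike.val_smul, Algebra.smul_def, Algebra.smul_def, hs0c,
      map_pow, MulMemClass.coe_mul]
    ring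
  rw [hsz]
  exact part2 (y * z)


end
end
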